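/- ELBO for the greedy planner: let V and D be as below and fix x_0 ∈ V^L with no mask symbols. Define the deterministic greedy reference path by Y_0 = (m,...,m) and, for k = 0,...,L-1, j_k = argmax_{i : Y_k^i = m} Cat( x_0^i; D^i(Y_k) ) (assumed unique or resolved by a fixed tie-breaking rule), with Y_{k+1} obtained from Y_k by setting coordinate j_k to x_0^{j_k}. Let p^{greedy} be the distribution of planner-guided sampling with the greedy planner G(z,x) = δ( argmax_{j : x^j = m} Cat(z^j; D^j(x)) ). Then log p^{greedy}(x_0) ≥ Σ_{k=0}^{L-1} Σ_{i : Y_k^i = m} log Cat( x_0^i; D^i(Y_k) ). -/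

import Mathlib

open Finset

/-- One step of planner-guided sampling: from state `x`, sample `z ~ D(x)`
coordinatewise independently, sample a position `i ~ G(z, x)`, and replace the `i`-th
coordinate of `x` by `z i`. -/
noncomputable def stepKernel {V : Type*} [Fintype V] [DecidableEq V] {L : ℕ}
    (D : (Fin L → V) → Fin L → V → ℝ)
    (G : (Fin L → V) → (Fin L → V) → Fin L → ℝ)
    (x w : Fin L → V) : ℝ :=
  ∑ z : Fin L → V, (∏ j, D x j (z j)) *
    ∑ i ∈ Finset.univ.filter (fun i : Fin L => Function.update x i (z i) = w), G z x i

/-- The distribution of the state after `k` steps of planner-guided sampling,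
starting from the fully masked sequence; `sampleDist D G mask L` is `p^G`. -/
noncomputable def sampleDist {V : Type*} [Fintype V] [DecidableEq V] {L : ℕ}
    (D : (Fin L → V) → Fin L → V → ℝ)
    (G : (Fin L → V) → (Fin L → V) → Fin L → ℝ)
    (mask : V) : ℕ → (Fin L → V) → ℝ
  | 0, w => if w = (fun _ => mask) then (1 : ℝ) else 0
  | k + 1, w => ∑ x : Fin L → V, sampleDist D G mask k x * stepKernel D G x w

/-- **ELBO for the greedy planner.**  Let `G` be the greedy planner for the denoiser
`D`: a deterministic planner supported on masked positions which always selects a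
masked position of maximal denoiser confidence (the argmax being resolved by a fixed
tie-breaking rule, so that `G` depends only on the values of `z` at masked positions).
Let `Y` be the deterministic greedy reference path: `Y 0` is fully masked and
`Y (k+1)` is obtained from `Y k` by setting coordinate `j k` to `x₀ (j k)`, where
`j k` is the masked position of `Y k` maximizing `Cat(x₀^i; D^i(Y k))` (the position
selected by the greedy planner on input `(x₀, Y k)`).  Then for a mask-free `x₀`,
`log p^{greedy}(x₀) ≥ Σ_{k=0}^{L-1} Σ_{i : (Y k)^i = m} log Cat(x₀^i; D^i(Y k))`.
The positivity hypothesis `hpos` ensures no `−∞` terms occur, so the extended-real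
inequality can be stated over `ℝ`. -/
theorem greedy_planner_elbo
    {V : Type*} [Fintype V] [DecidableEq V] {L : ℕ}
    (mask : V)
    (D : (Fin L → V) → Fin L → V → ℝ)
    (G : (Fin L → V) → (Fin L → V) → Fin L → ℝ)
    (hD0 : ∀ x i y, 0 ≤ D x i y) (hD1 : ∀ x i, ∑ y, D x i y = 1)
    (hG01 : ∀ z x i, G z x i = 0 ∨ G z x i = 1)
    (hGsupp : ∀ z x i, x i ≠ mask → G z x i = 0)
    (hGsum : ∀ z x, (∃ i, x i = mask) → ∑ i, G z x i = 1)
    (hGmax : ∀ z x i, G z x i = 1 → ∀ j, x j = mask → D x j (z j) ≤ D x i (z i))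
    (hGdep : ∀ z z' x, (∀ j, x j = mask → z j = z' j) → G z x = G z' x)
    (x0 : Fin L → V) (hx0 : ∀ i, x0 i ≠ mask)
    (jSel : ℕ → Fin L) (Y : ℕ → Fin L → V)
    (hY0 : Y 0 = fun _ => mask)
    (hjsel : ∀ k, k < L → G x0 (Y k) (jSel k) = 1)
    (hYsucc : ∀ k, Y (k + 1) = Function.update (Y k) (jSel k) (x0 (jSel k)))
    (hpos : ∀ k, k < L → ∀ i, Y k i = mask → 0 < D (Y k) i (x0 i)) :
    Real.log (sampleDist D G mask L x0)
      ≥ ∑ k ∈ Finset.range L,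
          ∑ i ∈ Finset.univ.filter (fun i : Fin L => Y k i = mask),
            Real.log (D (Y k) i (x0 i)) := by

  classical
  set Q : ℕ → ℝ := fun k => ∏ i ∈ Finset.univ.filter (fun i : Fin L => Y k i = mask),
    D (Y k) i (x0 i) with hQ
  have hGnn : ∀ z x i, 0 ≤ G z x i := fun z x i => by
    rcases hG01 z x i with h | h <;> simp [h]
  have hstep_nn : ∀ x w, 0 ≤ stepKernel D G x w := by
    intro x w
    apply Finset.sum_nonneg; intro z _
    exact mul_nonneg (Finset.prod_nonneg fun j _ => hD0 _ _ _)
      (Finset.sum_nonneg fun i _ => hGnn _ _ _)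
  have hsd_nn : ∀ k w, 0 ≤ sampleDist D G mask k w := by
    intro k; induction k with
    | zero => intro w; simp only [sampleDist]; split <;> norm_num
    | succ k ih => exact fun w => Finset.sum_nonneg fun x _ => mul_nonneg (ih x) (hstep_nn x w)
  have hjmask : ∀ k, k < L → Y k (jSel k) = mask := by
    intro k hk
    by_contra h
    have := hGsupp x0 (Y k) (jSel k) h
    rw [hjsel k hk] at this; norm_num at this
  have hagree : ∀ k i, Y k i ≠ mask → Y k i = x0 i := by
    intro k
    induction k with
    | zero => intro i h; rw [hY0] at h; simp at h
    | succ k ih =>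
      intro i h
      rw [hYsucc k] at h ⊢
      by_cases hi : i = jSel k
      · subst hi; simp [Function.update_self]
      · rw [Function.update_of_ne hi] at h ⊢; exact ih i h
  have hcard : ∀ k, k ≤ L →
      (Finset.univ.filter (fun i : Fin L => Y k i = mask)).card = L - k := by
    intro k
    induction k with
    | zero => intro _; rw [hY0]; simp
    | succ k ih =>
      intro hk
      have hk' : k < L := hk
      have hset : Finset.univ.filter (fun i : Fin L => Y (k+1) i = mask)
          = (Finset.univ.filter (fun i : Fin L => Y k i = mask)).erase (jSel k) := by
        ext i
        simp only [Finset.mem_filter, Finset.mem_erase, Finset.mem_univ, true_and]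
        rw [hYsucc k]
        by_cases hi : i = jSel k
        · subst hi; simp [Function.update_self, hx0 (jSel k)]
        · rw [Function.update_of_ne hi]; simp [hi]
      rw [hset, Finset.card_erase_of_mem (by simp [Finset.mem_filter, hjmask k hk']),
        ih (le_of_lt hk')]
      omega
  have hYL : Y L = x0 := by
    have h0 : (Finset.univ.filter (fun i : Fin L => Y L i = mask)).card = 0 := by
      rw [hcard L le_rfl]; omega
    rw [Finset.card_eq_zero] at h0
    funext i
    have hi : Y L i ≠ mask := by
      intro h
      have hm : i ∈ Finset.univ.filter (fun i : Fin L => Y L i = mask) := by simp [h]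
      rw [h0] at hm; simp at hm
    exact hagree L i hi
  have hstep : ∀ k, k < L → Q k ≤ stepKernel D G (Y k) (Y (k+1)) := by
    intro k hk
    set f : Fin L → V → ℝ := fun j y =>
      if Y k j = mask then (if y = x0 j then D (Y k) j y else 0) else D (Y k) j y with hf
    have hcol : ∀ j, ∑ y, f j y = if Y k j = mask then D (Y k) j (x0 j) else 1 := by
      intro j
      by_cases hj : Y k j = mask
      · simp only [hf, hj, if_true]
        rw [Finset.sum_ite_eq' Finset.univ (x0 j) (D (Y k) j)]
        simp
      · simp only [hf, hj, if_false]; exact hD1 _ _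
    have hsum : ∑ z : Fin L → V, ∏ j, f j (z j) = Q k := by
      rw [← Fintype.prod_sum]
      calc ∏ j, ∑ y, f j y = ∏ j, if Y k j = mask then D (Y k) j (x0 j) else 1 := by
            exact Finset.prod_congr rfl fun j _ => hcol j
        _ = Q k := (Finset.prod_filter _ _).symm
    have hterm : ∀ z : Fin L → V, ∏ j, f j (z j) ≤ (∏ j, D (Y k) j (z j)) *
        ∑ i ∈ Finset.univ.filter
          (fun i : Fin L => Function.update (Y k) i (z i) = Y (k+1)), G z (Y k) i := by
      intro z
      by_cases hz : ∀ j, Y k j = mask → z j = x0 j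
      · have hfz : ∏ j, f j (z j) = ∏ j, D (Y k) j (z j) := by
          apply Finset.prod_congr rfl; intro j _
          by_cases hj : Y k j = mask
          · simp [hf, hj, hz j hj]
          · simp [hf, hj]
        rw [hfz]
        have hGz : G z (Y k) = G x0 (Y k) := hGdep z x0 (Y k) hz
        have hmem : jSel k ∈ Finset.univ.filter
            (fun i : Fin L => Function.update (Y k) i (z i) = Y (k+1)) := by
          simp only [Finset.mem_filter, Finset.mem_univ, true_and]
          rw [hYsucc k, hz (jSel k) (hjmask k hk)]
        have h1 : (1:ℝ) ≤ ∑ i ∈ Finset.univ.filter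
            (fun i : Fin L => Function.update (Y k) i (z i) = Y (k+1)), G z (Y k) i := by
          calc (1:ℝ) = G z (Y k) (jSel k) := by rw [hGz, hjsel k hk]
            _ ≤ _ := Finset.single_le_sum (f := fun i => G z (Y k) i)
              (fun i _ => hGnn _ _ _) hmem
        calc ∏ j, D (Y k) j (z j) = (∏ j, D (Y k) j (z j)) * 1 := (mul_one _).symm
          _ ≤ _ := mul_le_mul_of_nonneg_left h1 (Finset.prod_nonneg fun j _ => hD0 _ _ _)
      · push_neg at hz
        obtain ⟨j0, hj0, hz0⟩ := hz
        have h0 : ∏ j, f j (z j) = 0 := by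
          apply Finset.prod_eq_zero (Finset.mem_univ j0)
          simp [hf, hj0, hz0]
        rw [h0]
        exact mul_nonneg (Finset.prod_nonneg fun j _ => hD0 _ _ _)
          (Finset.sum_nonneg fun i _ => hGnn _ _ _)
    calc Q k = ∑ z : Fin L → V, ∏ j, f j (z j) := hsum.symm
      _ ≤ stepKernel D G (Y k) (Y (k+1)) := Finset.sum_le_sum fun z _ => hterm z
  have hQpos : ∀ k, k < L → 0 < Q k := by
    intro k hk
    exact Finset.prod_pos fun i hi => hpos k hk i (by simpa using hi)
  have hmain : ∀ k, k ≤ L →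
      ∏ k' ∈ Finset.range k, Q k' ≤ sampleDist D G mask k (Y k) := by
    intro k
    induction k with
    | zero => intro _; simp [sampleDist, hY0]
    | succ k ih =>
      intro hk
      have hk' : k < L := hk
      rw [Finset.prod_range_succ]
      calc (∏ k' ∈ Finset.range k, Q k') * Q k
          ≤ sampleDist D G mask k (Y k) * stepKernel D G (Y k) (Y (k+1)) :=
            mul_le_mul (ih hk'.le) (hstep k hk') (hQpos k hk').le (hsd_nn _ _)
        _ ≤ sampleDist D G mask (k+1) (Y (k+1)) :=
            Finset.single_le_sum
              (f := fun x => sampleDist D G mask k x * stepKernel D G x (Y (k+1)))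
              (fun x _ => mul_nonneg (hsd_nn k x) (hstep_nn _ _)) (Finset.mem_univ (Y k))
  have hprodpos : 0 < ∏ k ∈ Finset.range L, Q k :=
    Finset.prod_pos fun k hk => hQpos k (Finset.mem_range.mp hk)
  have hle : ∏ k ∈ Finset.range L, Q k ≤ sampleDist D G mask L x0 := by
    rw [← hYL]; exact hmain L le_rfl
  have hlog := Real.log_le_log hprodpos hle
  rw [Real.log_prod (fun k hk => (hQpos k (Finset.mem_range.mp hk)).ne')] at hlog
  refine le_trans (le_of_eq ?_) hlog
  apply Finset.sum_congr rfl
  intro k hk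
  rw [hQ]
  exact (Real.log_prod fun i hi =>
    (hpos k (Finset.mem_range.mp hk) i (by simpa using hi)).ne').symm
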